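/- Let d be a positive integer and let K be a compact subset of the open positive orthant (0, ∞)^d. Then there exists a constant L > 0 such that sup_{q ∈ ℝ} |H(q; λ) − H(q; λ')| ≤ L ‖λ − λ'‖ for all λ, λ' ∈ K; that is, the mixture cumulative distribution function is Lipschitz in the weight vector, uniformly in the argument q, on compact subsets of the positive orthant. -/

import Mathlib

open MeasureTheory ProbabilityTheory Filter

/-- The product of `d` independent standard normal distributions. -/
noncomputable def stdGaussPi (d : ℕ) : Measure (Fin d → ℝ) :=
  Measure.pi fun _ => gaussianReal 0 1

/-- `mixCDF d lam q = H(q; λ) = P(∑ j, λ_j Z_j² ≤ q)` for `Z_1, …, Z_d` IID standard normal. -/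
noncomputable def mixCDF (d : ℕ) (lam : Fin d → ℝ) (q : ℝ) : ℝ :=
  (stdGaussPi d {z | ∑ j, lam j * z j ^ 2 ≤ q}).toReal

lemma gauss_Icc_le {u a b : ℝ} (hab : a ≤ b) (h : ∀ x ∈ Set.Icc a b, u ^ 2 ≤ x ^ 2) :
    (gaussianReal 0 1 (Set.Icc a b)).toReal ≤ (b - a) * Real.exp (-(u ^ 2) / 2) := by
  rw [gaussianReal_apply_eq_integral 0 one_ne_zero,
    ENNReal.toReal_ofReal (by
      apply setIntegral_nonneg measurableSet_Icc
      intro x _; exact gaussianPDFReal_nonneg 0 1 x)]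
  have hbd : ∀ x ∈ Set.Icc a b, ‖gaussianPDFReal 0 1 x‖ ≤ Real.exp (-(u ^ 2) / 2) := by
    intro x hx
    rw [Real.norm_eq_abs, abs_of_nonneg (gaussianPDFReal_nonneg 0 1 x)]
    unfold gaussianPDFReal
    have h1 : (1 : ℝ) ≤ Real.sqrt (2 * Real.pi * (1 : NNReal)) := by
      rw [show ((1 : NNReal) : ℝ) = 1 by norm_num, mul_one]
      rw [show (1 : ℝ) = Real.sqrt 1 by simp]
      exact Real.sqrt_le_sqrt (by nlinarith [Real.pi_gt_three])
    have h2 : Real.exp (-(x - 0) ^ 2 / (2 * (1 : NNReal))) ≤ Real.exp (-(u ^ 2) / 2) := by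
      apply Real.exp_le_exp.2
      have := h x hx
      rw [show ((1 : NNReal) : ℝ) = 1 by norm_num]
      nlinarith
    calc (Real.sqrt (2 * Real.pi * (1 : NNReal)))⁻¹ * Real.exp (-(x - 0) ^ 2 / (2 * (1 : NNReal)))
        ≤ 1 * Real.exp (-(u ^ 2) / 2) := by
          apply mul_le_mul _ h2 (Real.exp_nonneg _) zero_le_one
          exact inv_le_one_of_one_le₀ h1
      _ = Real.exp (-(u ^ 2) / 2) := one_mul _
  calc ∫ x in Set.Icc a b, gaussianPDFReal 0 1 x
      ≤ ‖∫ x in Set.Icc a b, gaussianPDFReal 0 1 x‖ := Real.le_norm_self _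
    _ ≤ Real.exp (-(u ^ 2) / 2) * (volume (Set.Icc a b)).toReal := by
        apply norm_setIntegral_le_of_norm_le_const
          (by rw [Real.volume_Icc]; exact ENNReal.ofReal_lt_top) hbd
    _ = (b - a) * Real.exp (-(u ^ 2) / 2) := by
        rw [Real.volume_Icc, ENNReal.toReal_ofReal (by linarith), mul_comm]

set_option maxHeartbeats 1000000 in
lemma kernelA_le {m M a b : ℝ} (hm : 0 < m) (hma : m ≤ a) (hab : a ≤ b) (hbM : b ≤ M)
    (c : ℝ) :
    (gaussianReal 0 1 {x : ℝ | a * x ^ 2 ≤ c}).toReal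
      - (gaussianReal 0 1 {x : ℝ | b * x ^ 2 ≤ c}).toReal
      ≤ (Real.sqrt M / (m * Real.sqrt m)) * (b - a) := by
  have ha : 0 < a := lt_of_lt_of_le hm hma
  have hb : 0 < b := lt_of_lt_of_le ha hab
  have hM : 0 < M := lt_of_lt_of_le hb hbM
  set μ := gaussianReal 0 1
  set A : Set ℝ := {x : ℝ | a * x ^ 2 ≤ c}
  set B : Set ℝ := {x : ℝ | b * x ^ 2 ≤ c}
  have hBA : B ⊆ A := by
    intro x hx
    simp only [A, B, Set.mem_setOf_eq] at *
    nlinarith [sq_nonneg x]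
  have hBm : MeasurableSet B :=
    measurableSet_le (by fun_prop) measurable_const
  have hdiff : (μ A).toReal - (μ B).toReal = (μ (A \ B)).toReal := by
    rw [measure_diff hBA hBm.nullMeasurableSet (measure_ne_top μ B),
      ENNReal.toReal_sub_of_le (measure_mono hBA) (measure_ne_top μ A)]
  rw [hdiff]
  rcases lt_or_ge c 0 with hc | hc
  · have hA : A = ∅ := by
      ext x; simp only [A, Set.mem_setOf_eq, Set.mem_empty_iff_false, iff_false, not_le]
      nlinarith [sq_nonneg x]
    rw [hA]
    simp only [Set.empty_diff, measure_empty, ENNReal.toReal_zero]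
    have : 0 < Real.sqrt M / (m * Real.sqrt m) := by positivity
    nlinarith
  · -- c ≥ 0
    set ta := Real.sqrt (c / a)
    set tb := Real.sqrt (c / b)
    have hca : 0 ≤ c / a := by positivity
    have hcb : 0 ≤ c / b := by positivity
    have htb0 : 0 ≤ tb := Real.sqrt_nonneg _
    have htab : tb ≤ ta := Real.sqrt_le_sqrt (by
      rw [div_le_div_iff₀ hb ha]; nlinarith)
    have hsub : A \ B ⊆ Set.Icc (-ta) (-tb) ∪ Set.Icc tb ta := by
      intro x hx
      obtain ⟨hxA, hxB⟩ := hx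
      simp only [A, B, Set.mem_setOf_eq] at hxA hxB
      push_neg at hxB
      have hx2a : x ^ 2 ≤ c / a := by rw [le_div_iff₀ ha]; linarith [hxA]
      have hx2b : c / b < x ^ 2 := by rw [div_lt_iff₀ hb]; linarith [hxB]
      have h1 : |x| ≤ ta := Real.abs_le_sqrt hx2a
      have h2 : tb ≤ |x| := by
        have := Real.sqrt_le_sqrt hx2b.le
        rwa [Real.sqrt_sq_eq_abs] at this
      rcases le_or_gt 0 x with hx0 | hx0
      · right
        rw [abs_of_nonneg hx0] at h1 h2
        exact ⟨h2, h1⟩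
      · left
        rw [abs_of_neg hx0] at h1 h2
        constructor <;> linarith
    have hmeas1 : (μ (A \ B)).toReal ≤ (μ (Set.Icc (-ta) (-tb))).toReal
        + (μ (Set.Icc tb ta)).toReal := by
      have h1 : μ (A \ B) ≤ μ (Set.Icc (-ta) (-tb)) + μ (Set.Icc tb ta) :=
        le_trans (measure_mono hsub) (measure_union_le _ _)
      have h2 := ENNReal.toReal_mono
        (by exact ENNReal.add_ne_top.2 ⟨measure_ne_top _ _, measure_ne_top _ _⟩) h1
      rwa [ENNReal.toReal_add (measure_ne_top _ _) (measure_ne_top _ _)] at h2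
    have hb1 : (μ (Set.Icc tb ta)).toReal ≤ (ta - tb) * Real.exp (-(tb ^ 2) / 2) :=
      gauss_Icc_le htab (fun x hx => by
        have h1 := hx.1
        nlinarith [htb0])
    have hb2 : (μ (Set.Icc (-ta) (-tb))).toReal ≤ (ta - tb) * Real.exp (-(tb ^ 2) / 2) := by
      have := gauss_Icc_le (u := tb) (by linarith : -ta ≤ -tb) (fun x hx => by
        have h2 := hx.2
        nlinarith [htb0])
      linarith [this]
    -- algebra
    have htb2 : tb ^ 2 = c / b := Real.sq_sqrt hcb
    have key : 2 * ((ta - tb) * Real.exp (-(tb ^ 2) / 2))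
        ≤ (Real.sqrt M / (m * Real.sqrt m)) * (b - a) := by
      have hsa : Real.sqrt a > 0 := Real.sqrt_pos.2 ha
      have hsb : Real.sqrt b > 0 := Real.sqrt_pos.2 hb
      have hsm : Real.sqrt m > 0 := Real.sqrt_pos.2 hm
      have hsa2 : Real.sqrt a ^ 2 = a := Real.sq_sqrt ha.le
      have hsb2 : Real.sqrt b ^ 2 = b := Real.sq_sqrt hb.le
      have hsm2 : Real.sqrt m ^ 2 = m := Real.sq_sqrt hm.le
      have hmsa : Real.sqrt m ≤ Real.sqrt a := Real.sqrt_le_sqrt hma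
      have hsab : Real.sqrt a ≤ Real.sqrt b := Real.sqrt_le_sqrt hab
      have hta : ta = Real.sqrt c / Real.sqrt a := Real.sqrt_div hc a
      have htbb : tb = Real.sqrt c / Real.sqrt b := Real.sqrt_div hc b
      have hsc : 0 ≤ Real.sqrt c := Real.sqrt_nonneg _
      -- step 1 : ta - tb ≤ sqrt c * (b - a) / (2 * m * sqrt m)
      have step1 : ta - tb ≤ Real.sqrt c * (b - a) / (2 * m * Real.sqrt m) := by
        rw [hta, htbb]
        rw [div_sub_div _ _ (ne_of_gt hsa) (ne_of_gt hsb), div_le_div_iff₀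
          (by positivity) (by positivity)]
        have hba : Real.sqrt b - Real.sqrt a ≥ 0 := by linarith
        have i1 : Real.sqrt m * Real.sqrt m ≤ Real.sqrt a * Real.sqrt b :=
          mul_le_mul hmsa (le_trans hmsa hsab) hsm.le hsa.le
        have i2 : 2 * Real.sqrt m ≤ Real.sqrt a + Real.sqrt b := by linarith
        have i3 : (2 * Real.sqrt m) * (Real.sqrt m * Real.sqrt m)
            ≤ (Real.sqrt a + Real.sqrt b) * (Real.sqrt a * Real.sqrt b) :=
          mul_le_mul i2 i1 (by positivity) (by positivity)
        have h4 : 0 ≤ Real.sqrt c * (Real.sqrt b - Real.sqrt a) *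
            ((Real.sqrt a + Real.sqrt b) * (Real.sqrt a * Real.sqrt b)
              - 2 * (Real.sqrt m ^ 2 * Real.sqrt m)) := by
          apply mul_nonneg (mul_nonneg hsc hba)
          nlinarith [i3]
        have e1 : Real.sqrt c * (b - a) * (Real.sqrt a * Real.sqrt b)
            = Real.sqrt c * (Real.sqrt b ^ 2 - Real.sqrt a ^ 2) * (Real.sqrt a * Real.sqrt b) := by
          rw [hsa2, hsb2]
        have e2 : (Real.sqrt c * Real.sqrt b - Real.sqrt a * Real.sqrt c) * (2 * m * Real.sqrt m)
            = Real.sqrt c * (Real.sqrt b - Real.sqrt a)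
              * (2 * (Real.sqrt m ^ 2) * Real.sqrt m) := by
          rw [hsm2]; ring
        nlinarith [h4, e1, e2]
      -- step 2 : exp (-(tb^2)/2) ≤ exp (-(c/(2*M)))
      have step2 : Real.exp (-(tb ^ 2) / 2) ≤ Real.exp (-(c / (2 * M))) := by
        apply Real.exp_le_exp.2
        rw [htb2]
        have hmono : c / (2 * M) ≤ c / (2 * b) := by
          rw [div_le_div_iff₀ (by linarith) (by linarith)]
          nlinarith
        have heq : -(c / b) / 2 = -(c / (2 * b)) := by ring
        linarith
      -- step 3 : sqrt c * exp (-(c/(2*M))) ≤ sqrt M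
      have step3 : Real.sqrt c * Real.exp (-(c / (2 * M))) ≤ Real.sqrt M := by
        have hu : Real.sqrt c ≤ Real.sqrt M * Real.exp (c / (2 * M)) := by
          have h1 : Real.sqrt c = Real.sqrt M * Real.sqrt (c / M) := by
            rw [← Real.sqrt_mul hM.le]
            congr 1
            field_simp
          rw [h1]
          have h2 : Real.sqrt (c / M) ≤ 1 + (c / M) / 2 := by
            have h3 : Real.sqrt (c / M) ^ 2 = c / M := Real.sq_sqrt (by positivity)
            nlinarith [sq_nonneg (Real.sqrt (c / M) - 1), Real.sqrt_nonneg (c / M)]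
          have h4 : 1 + (c / M) / 2 ≤ Real.exp (c / (2 * M)) := by
            have := Real.add_one_le_exp (c / (2 * M))
            have : c / M / 2 = c / (2 * M) := by ring
            linarith [Real.add_one_le_exp (c / (2 * M))]
          calc Real.sqrt M * Real.sqrt (c / M) ≤ Real.sqrt M * (1 + (c / M) / 2) := by
                apply mul_le_mul_of_nonneg_left h2 (Real.sqrt_nonneg _)
            _ ≤ Real.sqrt M * Real.exp (c / (2 * M)) := by
                rw [show c / M / 2 = c / (2 * M) by ring] at h4 ⊢
                exact mul_le_mul_of_nonneg_left h4 (Real.sqrt_nonneg _)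
        have hexp : Real.exp (-(c / (2 * M))) = (Real.exp (c / (2 * M)))⁻¹ := by
          rw [Real.exp_neg]
        rw [hexp]
        rw [mul_inv_le_iff₀ (Real.exp_pos _)]
        linarith
      calc 2 * ((ta - tb) * Real.exp (-(tb ^ 2) / 2))
          ≤ 2 * ((Real.sqrt c * (b - a) / (2 * m * Real.sqrt m)) * Real.exp (-(c / (2 * M)))) := by
            apply mul_le_mul_of_nonneg_left _ (by norm_num)
            apply mul_le_mul step1 step2 (Real.exp_nonneg _)
            exact div_nonneg (mul_nonneg hsc (by linarith)) (by positivity)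
        _ = (Real.sqrt c * Real.exp (-(c / (2 * M)))) * ((b - a) / (m * Real.sqrt m)) := by
            ring
        _ ≤ Real.sqrt M * ((b - a) / (m * Real.sqrt m)) := by
            apply mul_le_mul_of_nonneg_right step3
            have : 0 ≤ b - a := by linarith
            positivity
        _ = (Real.sqrt M / (m * Real.sqrt m)) * (b - a) := by ring
    linarith
lemma mixCDF_repr (n : ℕ) (i : Fin (n + 1)) (lam : Fin (n + 1) → ℝ) (q : ℝ) :
    mixCDF (n + 1) lam q
      = (∫⁻ y : Fin n → ℝ, gaussianReal 0 1
          {x : ℝ | lam i * x ^ 2 ≤ q - ∑ j, lam (i.succAbove j) * y j ^ 2}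
            ∂(Measure.pi fun _ : Fin n => gaussianReal 0 1)).toReal := by
  set B : Set (ℝ × (Fin n → ℝ)) :=
    {p | lam i * p.1 ^ 2 + ∑ j, lam (i.succAbove j) * p.2 j ^ 2 ≤ q} with hBdef
  have hB : MeasurableSet B := by
    apply measurableSet_le _ measurable_const
    apply Measurable.add
    · exact (measurable_fst.pow_const 2).const_mul _
    · apply Finset.measurable_sum
      intro j _
      exact ((measurable_snd.eval).pow_const 2).const_mul _
  have hmp := measurePreserving_piFinSuccAbove (fun _ : Fin (n + 1) => gaussianReal 0 1) i
  have hpre : (MeasurableEquiv.piFinSuccAbove (fun _ : Fin (n + 1) => ℝ) i) ⁻¹' B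
      = {z : Fin (n + 1) → ℝ | ∑ j, lam j * z j ^ 2 ≤ q} := by
    ext z
    simp only [Set.mem_preimage, MeasurableEquiv.piFinSuccAbove_apply, hBdef,
      Set.mem_setOf_eq, Fin.insertNthEquiv_symm_apply, Fin.removeNth]
    rw [Fin.sum_univ_succAbove (fun j => lam j * z j ^ 2) i]
  have h1 : stdGaussPi (n + 1) {z | ∑ j, lam j * z j ^ 2 ≤ q}
      = ((gaussianReal 0 1).prod (Measure.pi fun _ : Fin n => gaussianReal 0 1)) B := by
    rw [← hpre]
    exact hmp.measure_preimage hB.nullMeasurableSet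
  rw [mixCDF, h1, Measure.prod_apply_symm hB]
  congr 1
  apply lintegral_congr
  intro y
  congr 1
  ext x
  simp only [hBdef, Set.mem_setOf_eq, Set.mem_preimage]
  rw [le_sub_iff_add_le]

lemma kernelA_abs {m M a b : ℝ} (hm : 0 < m) (ha : a ∈ Set.Icc m M) (hb : b ∈ Set.Icc m M)
    (c : ℝ) :
    |(gaussianReal 0 1 {x : ℝ | a * x ^ 2 ≤ c}).toReal
      - (gaussianReal 0 1 {x : ℝ | b * x ^ 2 ≤ c}).toReal|
      ≤ (Real.sqrt M / (m * Real.sqrt m)) * |a - b| := by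
  have mono : ∀ u v : ℝ, u ≤ v → ({x : ℝ | v * x ^ 2 ≤ c} : Set ℝ) ⊆ {x : ℝ | u * x ^ 2 ≤ c} := by
    intro u v huv x hx
    simp only [Set.mem_setOf_eq] at *
    nlinarith [sq_nonneg x]
  rcases le_total a b with h | h
  · have hFF : (gaussianReal 0 1 {x : ℝ | b * x ^ 2 ≤ c}).toReal
        ≤ (gaussianReal 0 1 {x : ℝ | a * x ^ 2 ≤ c}).toReal :=
      ENNReal.toReal_mono (measure_ne_top _ _) (measure_mono (mono a b h))
    rw [abs_of_nonneg (by linarith), abs_of_nonpos (by linarith)]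
    have := kernelA_le hm ha.1 h hb.2 c
    linarith
  · have hFF : (gaussianReal 0 1 {x : ℝ | a * x ^ 2 ≤ c}).toReal
        ≤ (gaussianReal 0 1 {x : ℝ | b * x ^ 2 ≤ c}).toReal :=
      ENNReal.toReal_mono (measure_ne_top _ _) (measure_mono (mono b a h))
    rw [abs_of_nonpos (by linarith), abs_of_nonneg (by linarith)]
    have := kernelA_le hm hb.1 h ha.2 c
    linarith

lemma single_coord (n : ℕ) (i : Fin (n + 1)) (lam lam' : Fin (n + 1) → ℝ) {m M : ℝ}
    (hm : 0 < m) (hlam : ∀ j, lam j ∈ Set.Icc m M) (hlam' : ∀ j, lam' j ∈ Set.Icc m M)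
    (hoff : ∀ j, lam (i.succAbove j) = lam' (i.succAbove j)) (q : ℝ) :
    |mixCDF (n + 1) lam q - mixCDF (n + 1) lam' q|
      ≤ (Real.sqrt M / (m * Real.sqrt m)) * |lam i - lam' i| := by
  set ν := Measure.pi fun _ : Fin n => gaussianReal 0 1 with hν
  set ε := (Real.sqrt M / (m * Real.sqrt m)) * |lam i - lam' i| with hεdef
  have hε0 : 0 ≤ ε := by positivity
  set f : (Fin n → ℝ) → ENNReal := fun y => gaussianReal 0 1
    {x : ℝ | lam i * x ^ 2 ≤ q - ∑ j, lam (i.succAbove j) * y j ^ 2} with hf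
  set g : (Fin n → ℝ) → ENNReal := fun y => gaussianReal 0 1
    {x : ℝ | lam' i * x ^ 2 ≤ q - ∑ j, lam (i.succAbove j) * y j ^ 2} with hg
  have hrepr1 : mixCDF (n + 1) lam q = (∫⁻ y, f y ∂ν).toReal := mixCDF_repr n i lam q
  have hrepr2 : mixCDF (n + 1) lam' q = (∫⁻ y, g y ∂ν).toReal := by
    rw [mixCDF_repr n i lam' q]
    congr 1
    apply lintegral_congr
    intro y
    simp only [hg]
    congr 2
    ext x
    have : ∀ j, lam' (i.succAbove j) * y j ^ 2 = lam (i.succAbove j) * y j ^ 2 := by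
      intro j; rw [hoff j]
    rw [Finset.sum_congr rfl (fun j _ => this j)]
  have hpt : ∀ y, |(f y).toReal - (g y).toReal| ≤ ε := by
    intro y
    exact kernelA_abs hm (hlam i) (hlam' i) _
  have hfg : ∀ y, f y ≤ g y + ENNReal.ofReal ε := by
    intro y
    have h1 : (f y).toReal ≤ (g y).toReal + ε := by
      have := abs_le.1 (hpt y)
      linarith [this.2]
    calc f y = ENNReal.ofReal (f y).toReal := (ENNReal.ofReal_toReal (measure_ne_top _ _)).symm
      _ ≤ ENNReal.ofReal ((g y).toReal + ε) := ENNReal.ofReal_le_ofReal h1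
      _ = ENNReal.ofReal (g y).toReal + ENNReal.ofReal ε :=
          ENNReal.ofReal_add ENNReal.toReal_nonneg hε0
      _ = g y + ENNReal.ofReal ε := by rw [ENNReal.ofReal_toReal (measure_ne_top _ _)]
  have hgf : ∀ y, g y ≤ f y + ENNReal.ofReal ε := by
    intro y
    have h1 : (g y).toReal ≤ (f y).toReal + ε := by
      have := abs_le.1 (hpt y)
      linarith [this.1]
    calc g y = ENNReal.ofReal (g y).toReal := (ENNReal.ofReal_toReal (measure_ne_top _ _)).symm
      _ ≤ ENNReal.ofReal ((f y).toReal + ε) := ENNReal.ofReal_le_ofReal h1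
      _ = ENNReal.ofReal (f y).toReal + ENNReal.ofReal ε :=
          ENNReal.ofReal_add ENNReal.toReal_nonneg hε0
      _ = f y + ENNReal.ofReal ε := by rw [ENNReal.ofReal_toReal (measure_ne_top _ _)]
  have hle1 : (∫⁻ y, f y ∂ν) ≤ (∫⁻ y, g y ∂ν) + ENNReal.ofReal ε := by
    calc (∫⁻ y, f y ∂ν) ≤ ∫⁻ y, (g y + ENNReal.ofReal ε) ∂ν := lintegral_mono hfg
      _ = (∫⁻ y, g y ∂ν) + ENNReal.ofReal ε := by
          rw [lintegral_add_right _ measurable_const, lintegral_const, measure_univ, mul_one]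
  have hle2 : (∫⁻ y, g y ∂ν) ≤ (∫⁻ y, f y ∂ν) + ENNReal.ofReal ε := by
    calc (∫⁻ y, g y ∂ν) ≤ ∫⁻ y, (f y + ENNReal.ofReal ε) ∂ν := lintegral_mono hgf
      _ = (∫⁻ y, f y ∂ν) + ENNReal.ofReal ε := by
          rw [lintegral_add_right _ measurable_const, lintegral_const, measure_univ, mul_one]
  have hfin : ∀ h : (Fin n → ℝ) → ENNReal, (∀ y, h y ≤ 1) → (∫⁻ y, h y ∂ν) ≠ ⊤ := by
    intro h hh
    have : (∫⁻ y, h y ∂ν) ≤ 1 := by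
      calc (∫⁻ y, h y ∂ν) ≤ ∫⁻ _, 1 ∂ν := lintegral_mono hh
        _ = 1 := by rw [lintegral_const, measure_univ, mul_one]
    exact ne_top_of_le_ne_top ENNReal.one_ne_top this
  have hfint : (∫⁻ y, f y ∂ν) ≠ ⊤ := hfin f (fun y => prob_le_one)
  have hgint : (∫⁻ y, g y ∂ν) ≠ ⊤ := hfin g (fun y => prob_le_one)
  have ht1 : (∫⁻ y, f y ∂ν).toReal ≤ (∫⁻ y, g y ∂ν).toReal + ε := by
    have := ENNReal.toReal_mono (by
      exact ENNReal.add_ne_top.2 ⟨hgint, ENNReal.ofReal_ne_top⟩) hle1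
    rwa [ENNReal.toReal_add hgint ENNReal.ofReal_ne_top, ENNReal.toReal_ofReal hε0] at this
  have ht2 : (∫⁻ y, g y ∂ν).toReal ≤ (∫⁻ y, f y ∂ν).toReal + ε := by
    have := ENNReal.toReal_mono (by
      exact ENNReal.add_ne_top.2 ⟨hfint, ENNReal.ofReal_ne_top⟩) hle2
    rwa [ENNReal.toReal_add hfint ENNReal.ofReal_ne_top, ENNReal.toReal_ofReal hε0] at this
  rw [hrepr1, hrepr2]
  rw [abs_le]
  constructor <;> linarith

theorem stmt9 (d : ℕ) (hd : 0 < d) (K : Set (Fin d → ℝ)) (hK : IsCompact K)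
    (hKpos : ∀ lam ∈ K, ∀ i, 0 < lam i) :
    ∃ L > (0 : ℝ), ∀ lam ∈ K, ∀ lam' ∈ K, ∀ q : ℝ,
      |mixCDF d lam q - mixCDF d lam' q| ≤ L * ‖lam - lam'‖ := by
  obtain ⟨n, rfl⟩ : ∃ n, d = n + 1 := ⟨d - 1, (Nat.succ_pred_eq_of_pos hd).symm⟩
  rcases K.eq_empty_or_nonempty with hKe | hne
  · exact ⟨1, one_pos, by simp [hKe]⟩
  -- upper bound M
  obtain ⟨x₀, -, hx₀'⟩ := hK.exists_isMaxOn hne continuous_norm.continuousOn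
  have hx₀ : ∀ lam ∈ K, ‖lam‖ ≤ ‖x₀‖ := fun lam hl => isMaxOn_iff.1 hx₀' lam hl
  set M : ℝ := ‖x₀‖ with hM
  have hMb : ∀ lam ∈ K, ∀ i, lam i ≤ M := by
    intro lam hlam i
    calc lam i ≤ |lam i| := le_abs_self _
      _ = ‖lam i‖ := rfl
      _ ≤ ‖lam‖ := norm_le_pi_norm lam i
      _ ≤ M := hx₀ lam hlam
  -- lower bound m
  have hcont : ContinuousOn (fun lam : Fin (n + 1) → ℝ => ‖(fun i => (lam i)⁻¹ : Fin (n+1) → ℝ)‖) K := by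
    apply ContinuousOn.norm
    apply continuousOn_pi.2
    intro i
    exact ((continuous_apply i).continuousOn).inv₀ (fun x hx => (hKpos x hx i).ne')
  obtain ⟨y₀, hy₀K, hy₀'⟩ := hK.exists_isMaxOn hne hcont
  have hy₀ : ∀ lam ∈ K, ‖(fun i => (lam i)⁻¹ : Fin (n+1) → ℝ)‖ ≤ ‖(fun i => (y₀ i)⁻¹ : Fin (n+1) → ℝ)‖ :=
    fun lam hl => isMaxOn_iff.1 hy₀' lam hl
  set C : ℝ := ‖(fun i => (y₀ i)⁻¹ : Fin (n+1) → ℝ)‖ with hC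
  have hC0 : 0 < C := by
    have h1 : (y₀ 0)⁻¹ ≤ |(y₀ 0)⁻¹| := le_abs_self _
    have h2 : |(y₀ 0)⁻¹| ≤ C := norm_le_pi_norm (fun i => (y₀ i)⁻¹) 0
    have h3 : 0 < (y₀ 0)⁻¹ := inv_pos.2 (hKpos y₀ hy₀K 0)
    linarith
  set m : ℝ := C⁻¹ with hm
  have hm0 : 0 < m := inv_pos.2 hC0
  have hmb : ∀ lam ∈ K, ∀ i, m ≤ lam i := by
    intro lam hlam i
    have h1 : (lam i)⁻¹ ≤ C := by
      calc (lam i)⁻¹ ≤ |(lam i)⁻¹| := le_abs_self _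
        _ ≤ ‖(fun j => (lam j)⁻¹ : Fin (n+1) → ℝ)‖ := norm_le_pi_norm (fun j => (lam j)⁻¹) i
        _ ≤ C := hy₀ lam hlam
    have h2 : 0 < lam i := hKpos lam hlam i
    rw [hm]
    rw [inv_le_comm₀ hC0 h2] at *
    exact h1
  have hmM : m ≤ M := by
    obtain ⟨z, hz⟩ := hne
    exact le_trans (hmb z hz 0) (hMb z hz 0)
  have hM0 : 0 < M := lt_of_lt_of_le hm0 hmM
  set L₁ : ℝ := Real.sqrt M / (m * Real.sqrt m) with hL₁
  have hL₁0 : 0 < L₁ := by positivity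
  refine ⟨(n + 1 : ℝ) * L₁, by positivity, ?_⟩
  intro lam hlamK lam' hlam'K q
  -- hybrid sequence
  set hyb : ℕ → (Fin (n + 1) → ℝ) := fun k j => if (j : ℕ) < k then lam' j else lam j with hhyb
  have hyb0 : hyb 0 = lam := by
    funext j; simp [hhyb]
  have hybtop : hyb (n + 1) = lam' := by
    funext j; simp [hhyb, j.isLt]
  have hybIcc : ∀ k j, hyb k j ∈ Set.Icc m M := by
    intro k j
    by_cases h : (j : ℕ) < k
    · simp only [hhyb, if_pos h]
      exact ⟨hmb lam' hlam'K j, hMb lam' hlam'K j⟩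
    · simp only [hhyb, if_neg h]
      exact ⟨hmb lam hlamK j, hMb lam hlamK j⟩
  have hstep : ∀ k : ℕ, k < n + 1 →
      |mixCDF (n + 1) (hyb k) q - mixCDF (n + 1) (hyb (k + 1)) q| ≤ L₁ * ‖lam - lam'‖ := by
    intro k hk
    set i : Fin (n + 1) := ⟨k, hk⟩ with hi
    have hoff : ∀ j, hyb k (i.succAbove j) = hyb (k + 1) (i.succAbove j) := by
      intro j
      have hne' : ((i.succAbove j : Fin (n+1)) : ℕ) ≠ k := by
        intro hcontra
        exact (Fin.succAbove_ne i j) (Fin.ext hcontra)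
      simp only [hhyb]
      rcases Nat.lt_or_ge ((i.succAbove j : Fin (n+1)) : ℕ) k with hlt | hge
      · rw [if_pos hlt, if_pos (Nat.lt_succ_of_lt hlt)]
      · have h2 : ¬ ((i.succAbove j : Fin (n+1)) : ℕ) < k := not_lt.2 hge
        have h3 : ¬ ((i.succAbove j : Fin (n+1)) : ℕ) < k + 1 := by
          intro hcontra
          have := Nat.lt_succ_iff.1 hcontra
          exact hne' (le_antisymm this hge)
        rw [if_neg h2, if_neg h3]
    have hkey := single_coord n i (hyb k) (hyb (k + 1)) hm0 (hybIcc k) (hybIcc (k + 1)) hoff q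
    have hval : |hyb k i - hyb (k + 1) i| = |lam i - lam' i| := by
      simp only [hhyb, hi]
      rw [if_neg (by simp), if_pos (by simp)]
    rw [hval] at hkey
    calc |mixCDF (n + 1) (hyb k) q - mixCDF (n + 1) (hyb (k + 1)) q|
        ≤ L₁ * |lam i - lam' i| := hkey
      _ ≤ L₁ * ‖lam - lam'‖ := by
          apply mul_le_mul_of_nonneg_left _ hL₁0.le
          calc |lam i - lam' i| = ‖(lam - lam') i‖ := by simp [Real.norm_eq_abs]
            _ ≤ ‖lam - lam'‖ := norm_le_pi_norm (lam - lam') i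
  have htel : mixCDF (n + 1) lam q - mixCDF (n + 1) lam' q
      = ∑ k ∈ Finset.range (n + 1),
        (mixCDF (n + 1) (hyb k) q - mixCDF (n + 1) (hyb (k + 1)) q) := by
    rw [Finset.sum_range_sub' (fun k => mixCDF (n + 1) (hyb k) q), hyb0, hybtop]
  rw [htel]
  calc |∑ k ∈ Finset.range (n + 1),
        (mixCDF (n + 1) (hyb k) q - mixCDF (n + 1) (hyb (k + 1)) q)|
      ≤ ∑ k ∈ Finset.range (n + 1),
        |mixCDF (n + 1) (hyb k) q - mixCDF (n + 1) (hyb (k + 1)) q| :=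
        Finset.abs_sum_le_sum_abs _ _
    _ ≤ ∑ k ∈ Finset.range (n + 1), L₁ * ‖lam - lam'‖ := by
        apply Finset.sum_le_sum
        intro k hk
        exact hstep k (Finset.mem_range.1 hk)
    _ = (n + 1 : ℝ) * L₁ * ‖lam - lam'‖ := by
        rw [Finset.sum_const, Finset.card_range]
        ring
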